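/- Let β > 0 and 0 < c < 2/(9β), and set x₀ := (1/(2√c))·log((√2 + 3√(βc))/(√2 − 3√(βc))). Then for every x ∈ ℝ one has φ_{c/2}(x + 2x₀) − φ_{c/2}(x) = √β · Q_{c,β}(x + x₀). In particular the even 2-kink solution U_e(t,x) = b − [φ_{c/2}(x + c̃t + 2x₀) − φ_{c/2}(x + c̃t)], with b := 1/(3√β) and c̃ := 1/(3β) − c, coincides with b − √β · Q_{c,β}(x + c̃t + x₀). -/

import Mathlib

/-- The mKdV kink profile `φ_c(s) = √c · tanh(√c · s / √2)`. -/
noncomputable def kink (c : ℝ) (s : ℝ) : ℝ :=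
  Real.sqrt c * Real.tanh (Real.sqrt c * s / Real.sqrt 2)

/-- The Gardner soliton profile `Q_{c,β}(s) = 3c / (1 + ρ·cosh(√c·s))`,
with `ρ = (1 - 9βc/2)^{1/2}`. -/
noncomputable def gardnerQ (c β : ℝ) (s : ℝ) : ℝ :=
  3 * c / (1 + Real.sqrt (1 - 9 * β * c / 2) * Real.cosh (Real.sqrt c * s))

theorem stmt8 (β c : ℝ) (hβ : 0 < β) (hc : 0 < c) (hc2 : c < 2 / (9 * β))
    (x₀ : ℝ)
    (hx₀ : x₀ = (1 / (2 * Real.sqrt c)) *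
      Real.log ((Real.sqrt 2 + 3 * Real.sqrt (β * c)) / (Real.sqrt 2 - 3 * Real.sqrt (β * c)))) :
    (∀ x : ℝ, kink (c / 2) (x + 2 * x₀) - kink (c / 2) x
        = Real.sqrt β * gardnerQ c β (x + x₀)) ∧
    (∀ t x : ℝ,
      1 / (3 * Real.sqrt β)
        - (kink (c / 2) (x + (1 / (3 * β) - c) * t + 2 * x₀)
            - kink (c / 2) (x + (1 / (3 * β) - c) * t))
      = 1 / (3 * Real.sqrt β)
        - Real.sqrt β * gardnerQ c β (x + (1 / (3 * β) - c) * t + x₀)) := by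
  have hβc : 0 < β * c := mul_pos hβ hc
  have h9 : 9 * β * c < 2 := by
    have h := (lt_div_iff₀ (by positivity : (0:ℝ) < 9 * β)).mp hc2
    nlinarith
  set sβ := Real.sqrt β with hsβdef
  set sc := Real.sqrt c with hscdef
  set s2 := Real.sqrt 2 with hs2def
  have hsc : sc ^ 2 = c := Real.sq_sqrt hc.le
  have hs2 : s2 ^ 2 = 2 := Real.sq_sqrt (by norm_num)
  have hscpos : 0 < sc := Real.sqrt_pos.mpr hc
  have hs2pos : 0 < s2 := Real.sqrt_pos.mpr (by norm_num)
  have hsβpos : 0 < sβ := Real.sqrt_pos.mpr hβ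
  -- b' = 3√(βc) = 3 sβ sc
  have hb'eq : 3 * Real.sqrt (β * c) = 3 * sβ * sc := by
    rw [Real.sqrt_mul hβ.le]; ring
  set p := s2 + 3 * Real.sqrt (β * c) with hpdef
  set q := s2 - 3 * Real.sqrt (β * c) with hqdef
  have hb'sq : (3 * Real.sqrt (β * c)) ^ 2 = 9 * β * c := by
    rw [mul_pow, Real.sq_sqrt hβc.le]; ring
  have hb'pos : 0 < 3 * Real.sqrt (β * c) := by positivity
  have hb'lt : 3 * Real.sqrt (β * c) < s2 := by
    rw [hs2def]
    exact (Real.lt_sqrt (by positivity)).mpr (by nlinarith [hb'sq])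
  have hppos : 0 < p := by rw [hpdef]; linarith
  have hqpos : 0 < q := by rw [hqdef]; linarith
  set ρ := Real.sqrt (1 - 9 * β * c / 2) with hρdef
  have hρpos : 0 < ρ := Real.sqrt_pos.mpr (by linarith)
  have hρsq : ρ ^ 2 = 1 - 9 * β * c / 2 := Real.sq_sqrt (by linarith)
  set u := sc * x₀ with hudef
  -- exp u = √p / √q
  have hu : u = 1/2 * Real.log (p / q) := by
    rw [hudef, hx₀]
    field_simp
  have hexp2 : Real.exp u ^ 2 = p / q := by
    rw [sq, ← Real.exp_add, hu,
      show 1/2 * Real.log (p/q) + 1/2 * Real.log (p/q) = Real.log (p/q) by ring,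
      Real.exp_log (by positivity)]
  have hexpu : Real.exp u = Real.sqrt p / Real.sqrt q := by
    rw [← Real.sqrt_div hppos.le, ← hexp2, Real.sqrt_sq (Real.exp_pos u).le]
  have hsp : Real.sqrt p ^ 2 = p := Real.sq_sqrt hppos.le
  have hsq : Real.sqrt q ^ 2 = q := Real.sq_sqrt hqpos.le
  have hsppos : 0 < Real.sqrt p := Real.sqrt_pos.mpr hppos
  have hsqpos : 0 < Real.sqrt q := Real.sqrt_pos.mpr hqpos
  have hpq2 : Real.sqrt p * Real.sqrt q = s2 * ρ := by
    rw [← Real.sqrt_mul hppos.le, hs2def, hρdef, ← Real.sqrt_mul (by norm_num : (0:ℝ) ≤ 2)]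
    congr 1
    have : p * q = s2 ^ 2 - (3 * Real.sqrt (β * c)) ^ 2 := by rw [hpdef, hqdef]; ring
    rw [this, hs2, hb'sq]; ring
  have hcoshu : Real.cosh u = 1 / ρ := by
    rw [Real.cosh_eq, Real.exp_neg, hexpu]
    rw [show (Real.sqrt p / Real.sqrt q)⁻¹ = Real.sqrt q / Real.sqrt p by
      rw [inv_div]]
    rw [div_add_div _ _ (ne_of_gt hsqpos) (ne_of_gt hsppos)]
    rw [show Real.sqrt p * Real.sqrt p + Real.sqrt q * Real.sqrt q
        = Real.sqrt p ^ 2 + Real.sqrt q ^ 2 by ring, hsp, hsq,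
      show p + q = 2 * s2 by rw [hpdef, hqdef]; ring,
      show Real.sqrt q * Real.sqrt p = s2 * ρ by rw [mul_comm]; exact hpq2]
    field_simp
  have hsinhu : Real.sinh u = 3 * sβ * sc / (s2 * ρ) := by
    rw [Real.sinh_eq, Real.exp_neg, hexpu]
    rw [show (Real.sqrt p / Real.sqrt q)⁻¹ = Real.sqrt q / Real.sqrt p by
      rw [inv_div]]
    rw [div_sub_div _ _ (ne_of_gt hsqpos) (ne_of_gt hsppos)]
    rw [show Real.sqrt p * Real.sqrt p - Real.sqrt q * Real.sqrt q
        = Real.sqrt p ^ 2 - Real.sqrt q ^ 2 by ring, hsp, hsq,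
      show p - q = 2 * (3 * Real.sqrt (β * c)) by rw [hpdef, hqdef]; ring,
      show Real.sqrt q * Real.sqrt p = s2 * ρ by rw [mul_comm]; exact hpq2, hb'eq]
    field_simp
  -- tanh difference formula
  have key : ∀ A B : ℝ, Real.tanh A - Real.tanh B
      = 2 * Real.sinh (A - B) / (Real.cosh (A + B) + Real.cosh (A - B)) := by
    intro A B
    have hA := Real.cosh_pos (x := A)
    have hB := Real.cosh_pos (x := B)
    rw [Real.tanh_eq_sinh_div_cosh, Real.tanh_eq_sinh_div_cosh,
      Real.cosh_add, Real.cosh_sub, Real.sinh_sub]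
    rw [div_sub_div _ _ (ne_of_gt hA) (ne_of_gt hB)]
    rw [show Real.cosh A * Real.cosh B + Real.sinh A * Real.sinh B
        + (Real.cosh A * Real.cosh B - Real.sinh A * Real.sinh B)
        = 2 * (Real.cosh A * Real.cosh B) by ring]
    rw [show 2 * (Real.sinh A * Real.cosh B - Real.cosh A * Real.sinh B)
        / (2 * (Real.cosh A * Real.cosh B))
        = (Real.sinh A * Real.cosh B - Real.cosh A * Real.sinh B)
        / (Real.cosh A * Real.cosh B) by
      rw [mul_div_mul_left _ _ (by norm_num : (2:ℝ) ≠ 0)]]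
  clear_value u p q ρ s2 sc sβ
  have hhalf : Real.sqrt (c / 2) = sc / s2 := by
    rw [Real.sqrt_div hc.le, hscdef, hs2def]
  have harg : ∀ s : ℝ, Real.sqrt (c / 2) * s / s2 = sc * s / 2 := by
    intro s
    rw [hhalf, div_mul_eq_mul_div, div_div,
      show s2 * s2 = 2 by linear_combination hs2]
  have main : ∀ x : ℝ, kink (c / 2) (x + 2 * x₀) - kink (c / 2) x
      = sβ * gardnerQ c β (x + x₀) := by
    intro x
    simp only [kink, gardnerQ]
    rw [← hρdef, ← hs2def, ← hscdef, harg, harg, hhalf, ← mul_sub, key]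
    rw [show sc * (x + 2 * x₀) / 2 + sc * x / 2 = sc * (x + x₀) by ring,
      show sc * (x + 2 * x₀) / 2 - sc * x / 2 = u by rw [hudef]; ring,
      hcoshu, hsinhu]
    set C := Real.cosh (sc * (x + x₀)) with hCdef
    have hC : 0 < C := Real.cosh_pos _
    clear_value C
    have hden1 : (0:ℝ) < C + 1 / ρ := by positivity
    have hden2 : (0:ℝ) < 1 + ρ * C := by positivity
    rw [← hsc]
    field_simp
    linear_combination (-ρ*C - 1) * hs2
  constructor
  · intro x
    exact main x
  · intro t x
    rw [main (x + (1 / (3 * β) - c) * t)]
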